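/- Let F(u) = ∫_0^{1/sqrt(1+u^2)} sqrt(1-t^2) dt. For any real constants λ_0, λ_1, λ_2, λ_3, λ_4, the function M(u) = λ_4 u^4 + λ_3 u^3 + λ_2 u^2 + λ_1 u + λ_0 (u^4 + u^2) F(u) has at most 4 zeros (counted with multiplicity) in (0, ∞). -/

import Mathlib

open Real intervalIntegral Set

/-- Finsets of roots of a low-degree polynomial function are small. -/
lemma card_le_of_poly_roots (p : Polynomial ℝ) (hp : p ≠ 0) (n : ℕ) (hdeg : p.natDegree ≤ n)
    (s : Finset ℝ) (hs : ∀ x ∈ s, Polynomial.eval x p = 0) : s.card ≤ n := by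
  classical
  have hsub : s ⊆ p.roots.toFinset := by
    intro x hx
    exact Multiset.mem_toFinset.2 (Polynomial.mem_roots'.2 ⟨hp, hs x hx⟩)
  calc s.card ≤ p.roots.toFinset.card := Finset.card_le_card hsub
    _ ≤ Multiset.card p.roots := Multiset.toFinset_card_le _
    _ ≤ p.natDegree := Polynomial.card_roots' p
    _ ≤ n := hdeg

lemma card_le_quad (a b c : ℝ) (h : ¬ (a = 0 ∧ b = 0 ∧ c = 0)) (s : Finset ℝ)
    (hs : ∀ x ∈ s, a * x ^ 2 + b * x + c = 0) : s.card ≤ 2 := by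
  classical
  set p : Polynomial ℝ := Polynomial.C a * Polynomial.X ^ 2 + Polynomial.C b * Polynomial.X
    + Polynomial.C c with hpdef
  have hp : p ≠ 0 := by
    intro h0
    apply h
    have h2 : a = 0 := by
      have := congrArg (fun q => Polynomial.coeff q 2) h0
      simpa [hpdef] using this
    have h1 : b = 0 := by
      have := congrArg (fun q => Polynomial.coeff q 1) h0
      simpa [hpdef] using this
    have hc : c = 0 := by
      have := congrArg (fun q => Polynomial.coeff q 0) h0
      simpa [hpdef] using this
    exact ⟨h2, h1, hc⟩
  refine card_le_of_poly_roots p hp 2 ?_ s ?_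
  · rw [hpdef]; compute_degree
  · intro x hx
    simpa [hpdef] using hs x hx

lemma card_le_cubic (a b c d : ℝ) (h : ¬ (a = 0 ∧ b = 0 ∧ c = 0 ∧ d = 0)) (s : Finset ℝ)
    (hs : ∀ x ∈ s, a * x ^ 3 + b * x ^ 2 + c * x + d = 0) : s.card ≤ 3 := by
  classical
  set p : Polynomial ℝ := Polynomial.C a * Polynomial.X ^ 3 + Polynomial.C b * Polynomial.X ^ 2
    + Polynomial.C c * Polynomial.X + Polynomial.C d with hpdef
  have hp : p ≠ 0 := by
    intro h0
    apply h
    have h3 : a = 0 := by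
      have := congrArg (fun q => Polynomial.coeff q 3) h0
      simpa [hpdef] using this
    have h2 : b = 0 := by
      have := congrArg (fun q => Polynomial.coeff q 2) h0
      simpa [hpdef] using this
    have h1 : c = 0 := by
      have := congrArg (fun q => Polynomial.coeff q 1) h0
      simpa [hpdef] using this
    have hd : d = 0 := by
      have := congrArg (fun q => Polynomial.coeff q 0) h0
      simpa [hpdef] using this
    exact ⟨h3, h2, h1, hd⟩
  refine card_le_of_poly_roots p hp 3 ?_ s ?_
  · rw [hpdef]; compute_degree
  · intro x hx
    simpa [hpdef] using hs x hx

lemma rolle_card {f f' : ℝ → ℝ}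
    (hf : ∀ u ∈ Set.Ioi (0:ℝ), HasDerivAt f (f' u) u)
    {n : ℕ}
    (hd : ∀ s : Finset ℝ, (∀ x ∈ s, x ∈ Set.Ioi (0:ℝ) ∧ f' x = 0) → s.card ≤ n) :
    ∀ s : Finset ℝ, (∀ x ∈ s, x ∈ Set.Ioi (0:ℝ) ∧ f x = 0) → s.card ≤ n + 1 := by
  classical
  intro s hs
  by_contra hlt
  push_neg at hlt
  obtain ⟨t, hts, htc⟩ := Finset.exists_subset_card_eq (s := s) (n := n + 2) (by omega)
  set e := t.orderEmbOfFin htc with he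
  have hmem : ∀ i, e i ∈ s := fun i => hts (t.orderEmbOfFin_mem htc i)
  have hpos : ∀ i, (0:ℝ) < e i := fun i => (hs _ (hmem i)).1
  have hzero : ∀ i, f (e i) = 0 := fun i => (hs _ (hmem i)).2
  have key : ∀ i : Fin (n + 1), ∃ c,
      c ∈ Set.Ioo (e i.castSucc) (e i.succ) ∧ f' c = 0 := by
    intro i
    have hab : e i.castSucc < e i.succ := e.strictMono Fin.castSucc_lt_succ
    have hsub : Set.Icc (e i.castSucc) (e i.succ) ⊆ Set.Ioi (0:ℝ) := fun x hx =>
      lt_of_lt_of_le (hpos _) hx.1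
    have hcont : ContinuousOn f (Set.Icc (e i.castSucc) (e i.succ)) := fun x hx =>
      ((hf x (hsub hx)).continuousAt).continuousWithinAt
    obtain ⟨c, hc1, hc2⟩ := exists_hasDerivAt_eq_zero hab hcont
      (by rw [hzero, hzero]) (fun x hx => hf x (hsub (Set.Ioo_subset_Icc_self hx)))
    exact ⟨c, hc1, hc2⟩
  choose c hc1 hc2 using key
  have hmono : StrictMono c := by
    intro i j hij
    have h1 : c i < e i.succ := (hc1 i).2
    have h2 : e j.castSucc < c j := (hc1 j).1
    have h3 : e i.succ ≤ e j.castSucc := by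
      apply e.monotone
      simp only [Fin.le_def, Fin.lt_def, Fin.val_succ, Fin.coe_castSucc] at *
      omega
    linarith
  have hc := hd (Finset.image c Finset.univ) ?_
  · rw [Finset.card_image_of_injective _ hmono.injective, Finset.card_univ,
      Fintype.card_fin] at hc
    omega
  · intro x hx
    obtain ⟨i, _, rfl⟩ := Finset.mem_image.1 hx
    exact ⟨lt_trans (hpos i.castSucc) (hc1 i).1, hc2 i⟩

lemma finite_ncard_le {Z : Set ℝ} {n : ℕ}
    (h : ∀ s : Finset ℝ, (∀ x ∈ s, x ∈ Z) → s.card ≤ n) : Z.Finite ∧ Z.ncard ≤ n := by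
  have hfin : Z.Finite := by
    by_contra hinf
    obtain ⟨t, hts, htc⟩ := Set.Infinite.exists_subset_card_eq hinf (n + 1)
    have := h t (fun x hx => hts hx)
    omega
  refine ⟨hfin, ?_⟩
  rw [Set.ncard_eq_toFinset_card Z hfin]
  exact h _ (fun x hx => (Set.Finite.mem_toFinset hfin).1 hx)

lemma hasDerivAt_F (F : ℝ → ℝ)
    (hF : ∀ u, F u = ∫ t in (0:ℝ)..(1 / Real.sqrt (1 + u ^ 2)), Real.sqrt (1 - t ^ 2))
    {u : ℝ} (hu : 0 < u) : HasDerivAt F (-(u ^ 2) / (1 + u ^ 2) ^ 2) u := by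
  have hcont : Continuous fun t : ℝ => Real.sqrt (1 - t ^ 2) := by
    exact Real.continuous_sqrt.comp (by continuity)
  set g : ℝ → ℝ := fun x => ∫ t in (0:ℝ)..x, Real.sqrt (1 - t ^ 2) with hg
  have hA : (0:ℝ) < 1 + u ^ 2 := by positivity
  have hsA : Real.sqrt (1 + u ^ 2) ≠ 0 := by positivity
  have hgd : ∀ x : ℝ, HasDerivAt g (Real.sqrt (1 - x ^ 2)) x := fun x =>
    intervalIntegral.integral_hasDerivAt_right (hcont.intervalIntegrable _ _)
      (hcont.stronglyMeasurableAtFilter _ _) hcont.continuousAt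
  have hsq : HasDerivAt (fun v : ℝ => Real.sqrt (1 + v ^ 2))
      (2 * u / (2 * Real.sqrt (1 + u ^ 2))) u := by
    have h1 : HasDerivAt (fun v : ℝ => 1 + v ^ 2) (2 * u) u := by
      simpa using ((hasDerivAt_pow 2 u).const_add 1)
    exact h1.sqrt (by positivity)
  have hinv : HasDerivAt (fun v : ℝ => 1 / Real.sqrt (1 + v ^ 2))
      (-(2 * u / (2 * Real.sqrt (1 + u ^ 2))) / (Real.sqrt (1 + u ^ 2)) ^ 2) u := by
    simp only [one_div]
    exact hsq.inv hsA
  have hcomp := (hgd (1 / Real.sqrt (1 + u ^ 2))).comp u hinv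
  have hFeq : F = fun v => g (1 / Real.sqrt (1 + v ^ 2)) := funext fun v => by rw [hF v]
  rw [hFeq]
  refine hcomp.congr_deriv ?_
  symm
  have h1 : Real.sqrt (1 - (1 / Real.sqrt (1 + u ^ 2)) ^ 2) = u / Real.sqrt (1 + u ^ 2) := by
    rw [div_pow, one_pow, Real.sq_sqrt hA.le,
      show (1 : ℝ) - 1 / (1 + u ^ 2) = u ^ 2 / (1 + u ^ 2) by field_simp; ring,
      Real.sqrt_div (by positivity) , Real.sqrt_sq hu.le]
  rw [h1, Real.sq_sqrt hA.le]
  field_simp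
  ring_nf
  rw [Real.sq_sqrt hA.le]
  ring

theorem stmt_15
    (F : ℝ → ℝ)
    (hF : ∀ u, F u = ∫ t in (0:ℝ)..(1 / Real.sqrt (1 + u ^ 2)),
      Real.sqrt (1 - t ^ 2))
    (l0 l1 l2 l3 l4 : ℝ)
    (M : ℝ → ℝ)
    (hM : ∀ u, M u = l4 * u ^ 4 + l3 * u ^ 3 + l2 * u ^ 2 + l1 * u +
      l0 * (u ^ 4 + u ^ 2) * F u)
    (hne : ¬ (l0 = 0 ∧ l1 = 0 ∧ l2 = 0 ∧ l3 = 0 ∧ l4 = 0)) :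
    {u : ℝ | u ∈ Set.Ioi (0:ℝ) ∧ M u = 0}.Finite ∧
    {u : ℝ | u ∈ Set.Ioi (0:ℝ) ∧ M u = 0}.ncard ≤ 4 := by
  apply finite_ncard_le
  intro s hs
  replace hs : ∀ x ∈ s, x ∈ Set.Ioi (0:ℝ) ∧ M x = 0 := fun x hx => hs x hx
  by_cases hl0 : l0 = 0
  · -- M is u times a cubic
    have hcub : ∀ x ∈ s, l4 * x ^ 3 + l3 * x ^ 2 + l2 * x + l1 = 0 := by
      intro x hx
      obtain ⟨hx0, hxz⟩ := hs x hx
      rw [hM x, hl0] at hxz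
      have hx2 : x * (l4 * x ^ 3 + l3 * x ^ 2 + l2 * x + l1) = 0 := by
        linear_combination hxz
      rcases mul_eq_zero.1 hx2 with h | h
      · exact absurd h (ne_of_gt hx0)
      · exact h
    have hne' : ¬ (l4 = 0 ∧ l3 = 0 ∧ l2 = 0 ∧ l1 = 0) := by
      rintro ⟨h4, h3, h2, h1⟩
      exact hne ⟨hl0, h1, h2, h3, h4⟩
    exact le_trans (card_le_cubic l4 l3 l2 l1 hne' s hcub) (by norm_num)
  · -- l0 ≠ 0 : divide by u^2(1+u^2) and use Rolle twice
    have hNd : ∀ u ∈ Set.Ioi (0:ℝ), HasDerivAt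
        (fun v => M v / (v ^ 2 * (1 + v ^ 2)))
        ((fun v => (-(l0 + l3) * v ^ 4 + 2 * (l4 - l2) * v ^ 3 + (l3 - 3 * l1) * v ^ 2 - l1) /
          (v ^ 2 * (1 + v ^ 2) ^ 2)) u) u := by
      intro u hu
      have hu0 : u ≠ 0 := ne_of_gt hu
      have hA : (0:ℝ) < 1 + u ^ 2 := by positivity
      have hF' := hasDerivAt_F F hF hu
      have h4 : HasDerivAt (fun v : ℝ => v ^ 4) (4 * u ^ 3) u := by
        simpa using hasDerivAt_pow 4 u
      have h3 : HasDerivAt (fun v : ℝ => v ^ 3) (3 * u ^ 2) u := by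
        simpa using hasDerivAt_pow 3 u
      have h2 : HasDerivAt (fun v : ℝ => v ^ 2) (2 * u) u := by
        simpa using hasDerivAt_pow 2 u
      have hMeq : M = fun v => l4 * v ^ 4 + l3 * v ^ 3 + l2 * v ^ 2 + l1 * v +
          l0 * (v ^ 4 + v ^ 2) * F v := funext hM
      have hprod : HasDerivAt (fun v : ℝ => l0 * (v ^ 4 + v ^ 2) * F v)
          (l0 * ((4 * u ^ 3 + 2 * u) * F u + (u ^ 4 + u ^ 2) * (-(u ^ 2) / (1 + u ^ 2) ^ 2))) u := by
        have heq : (fun v : ℝ => l0 * (v ^ 4 + v ^ 2) * F v)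
            = fun v => l0 * ((v ^ 4 + v ^ 2) * F v) := by funext v; ring
        rw [heq]
        exact ((h4.add h2).mul hF').const_mul l0
      have hMd : HasDerivAt M
          (l4 * (4 * u ^ 3) + l3 * (3 * u ^ 2) + l2 * (2 * u) + l1 * 1 +
            l0 * ((4 * u ^ 3 + 2 * u) * F u + (u ^ 4 + u ^ 2) * (-(u ^ 2) / (1 + u ^ 2) ^ 2))) u := by
        rw [hMeq]
        exact ((((h4.const_mul l4).add (h3.const_mul l3)).add (h2.const_mul l2)).add
          ((hasDerivAt_id' u).const_mul l1)).add hprod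
      have hDd : HasDerivAt (fun v : ℝ => v ^ 2 * (1 + v ^ 2))
          (2 * u * (1 + u ^ 2) + u ^ 2 * (2 * u)) u := h2.mul (h2.const_add 1)
      have hD0 : u ^ 2 * (1 + u ^ 2) ≠ 0 := by positivity
      have hdiv := hMd.div hDd hD0
      refine hdiv.congr_deriv ?_
      symm
      rw [hM u]
      field_simp
      ring
    have hd3 : ∀ s2 : Finset ℝ, (∀ x ∈ s2, x ∈ Set.Ioi (0:ℝ) ∧
        (fun v => (-(l0 + l3) * v ^ 4 + 2 * (l4 - l2) * v ^ 3 + (l3 - 3 * l1) * v ^ 2 - l1) /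
          (v ^ 2 * (1 + v ^ 2) ^ 2)) x = 0) → s2.card ≤ 3 := by
      intro s2 hs2
      have hsR : ∀ x ∈ s2, x ∈ Set.Ioi (0:ℝ) ∧
          -(l0 + l3) * x ^ 4 + 2 * (l4 - l2) * x ^ 3 + (l3 - 3 * l1) * x ^ 2 - l1 = 0 := by
        intro x hx
        obtain ⟨hx0, hxz⟩ := hs2 x hx
        have hden : x ^ 2 * (1 + x ^ 2) ^ 2 ≠ 0 := by
          have : (0:ℝ) < x := hx0
          positivity
        exact ⟨hx0, (div_eq_zero_iff.1 hxz).resolve_right hden⟩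
      by_cases habc : l0 + l3 = 0 ∧ l4 - l2 = 0 ∧ l3 - 3 * l1 = 0
      · rcases Finset.eq_empty_or_nonempty s2 with h | ⟨x, hx⟩
        · simp [h]
        · exfalso
          obtain ⟨e1, e2, e3⟩ := habc
          have hxz := (hsR x hx).2
          have hl1 : l1 = 0 := by
            linear_combination -hxz - x ^ 4 * e1 + 2 * x ^ 3 * e2 + x ^ 2 * e3
          have hl3 : l3 = 0 := by linarith
          exact hl0 (by linarith)
      · refine rolle_card
          (f := fun v => -(l0 + l3) * v ^ 4 + 2 * (l4 - l2) * v ^ 3 + (l3 - 3 * l1) * v ^ 2 - l1)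
          (f' := fun v => v * (4 * (-(l0 + l3)) * v ^ 2 + 3 * (2 * (l4 - l2)) * v
            + 2 * (l3 - 3 * l1))) ?_ ?_ s2 hsR
        · intro u _
          have h4 : HasDerivAt (fun v : ℝ => v ^ 4) (4 * u ^ 3) u := by
            simpa using hasDerivAt_pow 4 u
          have h3 : HasDerivAt (fun v : ℝ => v ^ 3) (3 * u ^ 2) u := by
            simpa using hasDerivAt_pow 3 u
          have h2 : HasDerivAt (fun v : ℝ => v ^ 2) (2 * u) u := by
            simpa using hasDerivAt_pow 2 u
          have := (((h4.const_mul (-(l0 + l3))).add (h3.const_mul (2 * (l4 - l2)))).add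
            (h2.const_mul (l3 - 3 * l1))).sub_const l1
          refine this.congr_deriv ?_
          beta_reduce
          ring
        · intro s3 hs3
          refine card_le_quad (4 * (-(l0 + l3))) (3 * (2 * (l4 - l2))) (2 * (l3 - 3 * l1)) ?_ s3 ?_
          · rintro ⟨q1, q2, q3⟩
            exact habc ⟨by linarith, by linarith, by linarith⟩
          · intro x hx
            obtain ⟨hx0, hxz⟩ := hs3 x hx
            rcases mul_eq_zero.1 hxz with h | h
            · exact absurd h (ne_of_gt hx0)
            · exact h
    have hsN : ∀ x ∈ s, x ∈ Set.Ioi (0:ℝ) ∧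
        (fun v => M v / (v ^ 2 * (1 + v ^ 2))) x = 0 := by
      intro x hx
      obtain ⟨hx0, hxz⟩ := hs x hx
      exact ⟨hx0, by simp [hxz]⟩
    exact rolle_card hNd hd3 s hsN
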